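/- Let k ≥ 2 and let ω : Fin k → ℝ be a weight vector with ω₂ = 2ω₁. Let β : Fin k → ℕ be an exponent vector with β₂ ≥ 1 and let β' = β + 2e₁ − e₂ (so β' and β are adjacent elements of a string). Then (β₁+2)(β₁+1)·A_ω(β') = β₂·(Σ_{i=1}^k β_i)·A_ω(β). (This is the coefficient cancellation of Lemma 3.3 in the case m = 1.) -/

import Mathlib

/-- The weight coefficient `A_ω(α)` of Theorem 2.1 (for `α ≠ 0`). -/
noncomputable def Aw {k : ℕ} (ω : Fin k → ℝ) (α : Fin k → ℕ) : ℝ :=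
  (Nat.multinomial Finset.univ α : ℝ) * (∑ i, (α i : ℝ) * ω i) / (∑ i, (α i : ℝ))

private lemma split_sum {k : ℕ} (i0 i1 : Fin k) (hne : i0 ≠ i1)
    {M : Type*} [AddCommMonoid M] (f : Fin k → M) :
    ∑ i, f i = f i0 + (f i1 + ∑ i ∈ (Finset.univ.erase i0).erase i1, f i) := by
  rw [← Finset.add_sum_erase _ f (Finset.mem_univ i0),
    ← Finset.add_sum_erase _ f (Finset.mem_erase.mpr ⟨Ne.symm hne, Finset.mem_univ i1⟩)]

private lemma split_prod {k : ℕ} (i0 i1 : Fin k) (hne : i0 ≠ i1)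
    {M : Type*} [CommMonoid M] (f : Fin k → M) :
    ∏ i, f i = f i0 * (f i1 * ∏ i ∈ (Finset.univ.erase i0).erase i1, f i) := by
  rw [← Finset.mul_prod_erase _ f (Finset.mem_univ i0),
    ← Finset.mul_prod_erase _ f (Finset.mem_erase.mpr ⟨Ne.symm hne, Finset.mem_univ i1⟩)]

private lemma key_nat (k : ℕ) (i0 i1 : Fin k) (hne : i0 ≠ i1) (β : Fin k → ℕ) (b : ℕ)
    (hb : β i1 = b + 1) :
    (β i0 + 2) * (β i0 + 1) *
        Nat.multinomial Finset.univ
          (Function.update (Function.update β i0 (β i0 + 2)) i1 b) =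
      β i1 * (∑ i, β i + 1) * Nat.multinomial Finset.univ β := by
  set β' := Function.update (Function.update β i0 (β i0 + 2)) i1 b with hβ'def
  have hβ'0 : β' i0 = β i0 + 2 := by
    rw [hβ'def, Function.update_of_ne hne, Function.update_self]
  have hβ'1 : β' i1 = b := by rw [hβ'def, Function.update_self]
  have heq : ∀ i ∈ (Finset.univ.erase i0).erase i1, β' i = β i := by
    intro i hi
    simp only [Finset.mem_erase] at hi
    rw [hβ'def, Function.update_of_ne hi.1, Function.update_of_ne hi.2.1]
  set P := ∏ i ∈ (Finset.univ.erase i0).erase i1, Nat.factorial (β i) with hP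
  have hprod' : ∏ i, Nat.factorial (β' i) =
      Nat.factorial (β i0 + 2) * (Nat.factorial b * P) := by
    rw [split_prod i0 i1 hne (fun i => Nat.factorial (β' i)), hβ'0, hβ'1, hP,
      Finset.prod_congr rfl (fun i hi => congrArg Nat.factorial (heq i hi))]
  have hprod : ∏ i, Nat.factorial (β i) =
      Nat.factorial (β i0) * (Nat.factorial (b + 1) * P) := by
    rw [split_prod i0 i1 hne (fun i => Nat.factorial (β i)), hb]
  have hsum' : ∑ i, β' i = (∑ i, β i) + 1 := by
    have h3 : ∑ i ∈ (Finset.univ.erase i0).erase i1, β' i =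
        ∑ i ∈ (Finset.univ.erase i0).erase i1, β i := Finset.sum_congr rfl heq
    rw [split_sum i0 i1 hne β', split_sum i0 i1 hne β, hβ'0, hβ'1, hb, h3]
    omega
  have hspec' := Nat.multinomial_spec Finset.univ β'
  have hspec := Nat.multinomial_spec Finset.univ β
  rw [hprod', hsum'] at hspec'
  rw [hprod] at hspec
  have hc : 0 < Nat.factorial (β i0) * (Nat.factorial b * P) := by positivity
  apply Nat.eq_of_mul_eq_mul_right hc
  have e1 : (β i0 + 2) * (β i0 + 1) * Nat.multinomial Finset.univ β' *
      (Nat.factorial (β i0) * (Nat.factorial b * P)) =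
      Nat.factorial ((∑ i, β i) + 1) := by
    rw [← hspec']
    have : Nat.factorial (β i0 + 2) =
        (β i0 + 2) * ((β i0 + 1) * Nat.factorial (β i0)) := by
      rw [Nat.factorial_succ, Nat.factorial_succ]
    rw [this]; ring
  have e2 : β i1 * ((∑ i, β i) + 1) * Nat.multinomial Finset.univ β *
      (Nat.factorial (β i0) * (Nat.factorial b * P)) =
      Nat.factorial ((∑ i, β i) + 1) := by
    rw [Nat.factorial_succ, ← hspec, hb, Nat.factorial_succ]
    ring
  rw [e1, e2]

/-- Coefficient cancellation of Lemma 3.3 in the case `m = 1`: if `ω₂ = 2ω₁` and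
`β' = β + 2e₁ − e₂` then `(β₁+2)(β₁+1)·A_ω(β') = β₂·(Σ β_i)·A_ω(β)`. -/
theorem string_cancellation_m_one (k : ℕ) (hk : 2 ≤ k) (ω : Fin k → ℝ)
    (hω : ω (⟨1, by omega⟩ : Fin k) = 2 * ω (⟨0, by omega⟩ : Fin k))
    (β : Fin k → ℕ) (hβ : 1 ≤ β (⟨1, by omega⟩ : Fin k)) :
    ((β (⟨0, by omega⟩ : Fin k) : ℝ) + 2) * ((β (⟨0, by omega⟩ : Fin k) : ℝ) + 1) *
        Aw ω (Function.update
          (Function.update β (⟨0, by omega⟩ : Fin k) (β (⟨0, by omega⟩ : Fin k) + 2))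
          (⟨1, by omega⟩ : Fin k) (β (⟨1, by omega⟩ : Fin k) - 1)) =
      (β (⟨1, by omega⟩ : Fin k) : ℝ) * (∑ i, (β i : ℝ)) * Aw ω β := by
  set i0 : Fin k := ⟨0, by omega⟩
  set i1 : Fin k := ⟨1, by omega⟩
  have hne : i0 ≠ i1 := by simp [i0, i1, Fin.ext_iff]
  obtain ⟨b, hb⟩ : ∃ b, β i1 = b + 1 := ⟨β i1 - 1, by omega⟩
  have hb' : β i1 - 1 = b := by omega
  rw [hb']
  set β' := Function.update (Function.update β i0 (β i0 + 2)) i1 b with hβ'def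
  have hβ'0 : β' i0 = β i0 + 2 := by
    rw [hβ'def, Function.update_of_ne hne, Function.update_self]
  have hβ'1 : β' i1 = b := by rw [hβ'def, Function.update_self]
  have heq : ∀ i ∈ (Finset.univ.erase i0).erase i1, β' i = β i := by
    intro i hi
    simp only [Finset.mem_erase] at hi
    rw [hβ'def, Function.update_of_ne hi.1, Function.update_of_ne hi.2.1]
  -- sums
  have hsum' : ∑ i, (β' i : ℝ) = (∑ i, (β i : ℝ)) + 1 := by
    rw [split_sum i0 i1 hne (fun i => (β' i : ℝ)),
      split_sum i0 i1 hne (fun i => (β i : ℝ)), hβ'0, hβ'1, hb,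
      Finset.sum_congr rfl (fun i hi => congrArg (fun n : ℕ => (n : ℝ)) (heq i hi))]
    push_cast; ring
  -- weighted sums
  have hw : ∑ i, (β' i : ℝ) * ω i = ∑ i, (β i : ℝ) * ω i := by
    rw [split_sum i0 i1 hne (fun i => (β' i : ℝ) * ω i),
      split_sum i0 i1 hne (fun i => (β i : ℝ) * ω i), hβ'0, hβ'1, hb,
      Finset.sum_congr rfl
        (fun i hi => congrArg (fun n : ℕ => (n : ℝ) * ω i) (heq i hi))]
    push_cast; rw [hω]; ring
  -- multinomial identity, cast to ℝ
  have hkey : ((β i0 : ℝ) + 2) * ((β i0 : ℝ) + 1) *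
      (Nat.multinomial Finset.univ β' : ℝ) =
      (β i1 : ℝ) * ((∑ i, (β i : ℝ)) + 1) * (Nat.multinomial Finset.univ β : ℝ) := by
    have h := key_nat k i0 i1 hne β b hb
    calc ((β i0 : ℝ) + 2) * ((β i0 : ℝ) + 1) * (Nat.multinomial Finset.univ β' : ℝ)
        = (((β i0 + 2) * (β i0 + 1) * Nat.multinomial Finset.univ β' : ℕ) : ℝ) := by
          push_cast; ring
      _ = ((β i1 * (∑ i, β i + 1) * Nat.multinomial Finset.univ β : ℕ) : ℝ) := by
          rw [h]
      _ = (β i1 : ℝ) * ((∑ i, (β i : ℝ)) + 1) * (Nat.multinomial Finset.univ β : ℝ) := by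
          push_cast; ring
  have hS : (0 : ℝ) < ∑ i, (β i : ℝ) := by
    have h1 : (1 : ℝ) ≤ (β i1 : ℝ) := by exact_mod_cast hβ
    have h2 := Finset.single_le_sum (f := fun i => (β i : ℝ))
      (fun i _ => by positivity) (Finset.mem_univ i1)
    linarith
  rw [Aw, Aw, hsum', hw]
  field_simp
  linear_combination (∑ i, (β i : ℝ) * ω i) * hkey
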